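/- arXiv:2312.16452 — 2 statements merged into one kernel-verified Lean document; each statement's English description precedes it below -/
import Mathlib

section
/- Let ΛQ(y) = 2y/(1+y²) and Γ(y) = (2y/(1+y²))·( y²/8 + (log y)/2 − 1/(8y²) ). For any continuous f : [0,∞) → ℝ define (H⁻¹f)(y) = ΛQ(y) ∫₀^y f(x)Γ(x) x dx − Γ(y) ∫₀^y f(x)ΛQ(x) x dx. Then H⁻¹f is twice continuously differentiable on (0,∞) and satisfies H(H⁻¹f) = f on (0,∞), i.e. −(H⁻¹f)'' − (1/y)(H⁻¹f)' + V(y)(H⁻¹f)/y² = f(y) for all y > 0. Moreover (H⁻¹f)(y) = O(y²) as y → 0⁺. -/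
open Real Filter Asymptotics MeasureTheory

/-- The resonance `ΛQ(y) = 2y/(1+y²)`. -/
noncomputable def LamQ (y : ℝ) : ℝ := 2 * y / (1 + y ^ 2)

/-- The potential `V(y) = (y⁴ - 6y² + 1)/(1+y²)²`. -/
noncomputable def Vfun (y : ℝ) : ℝ := (y ^ 4 - 6 * y ^ 2 + 1) / (1 + y ^ 2) ^ 2

/-- The second element `Γ` of the kernel of `H`. -/
noncomputable def Gam (y : ℝ) : ℝ :=
  (2 * y / (1 + y ^ 2)) * (y ^ 2 / 8 + Real.log y / 2 - 1 / (8 * y ^ 2))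

/-- The inverse `H⁻¹f` given by variation of parameters. -/
noncomputable def Hinv (f : ℝ → ℝ) (y : ℝ) : ℝ :=
  LamQ y * (∫ x in (0:ℝ)..y, f x * Gam x * x) - Gam y * (∫ x in (0:ℝ)..y, f x * LamQ x * x)

noncomputable def Gg (x : ℝ) : ℝ :=
  x ^ 4 / (4 * (1 + x ^ 2)) + x * (x * Real.log x) / (1 + x ^ 2) - 1 / (4 * (1 + x ^ 2))
noncomputable def Lx (x : ℝ) : ℝ := 2 * x ^ 2 / (1 + x ^ 2)

lemma onene (x : ℝ) : (1 + x ^ 2 : ℝ) ≠ 0 := by positivity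

lemma Gam_mul {x : ℝ} (hx : x ≠ 0) : Gam x * x = Gg x := by
  unfold Gam Gg; field_simp; ring

lemma LamQ_mul (x : ℝ) : LamQ x * x = Lx x := by
  unfold LamQ Lx; rw [div_mul_eq_mul_div]; ring_nf

lemma cont_Gg : Continuous Gg := by
  unfold Gg
  have h1 : Continuous fun x : ℝ => x ^ 4 / (4 * (1 + x ^ 2)) :=
    (continuous_pow 4).div (by continuity) (fun x => by positivity)
  have h2 : Continuous fun x : ℝ => x * (x * Real.log x) / (1 + x ^ 2) :=
    (continuous_id.mul Real.continuous_mul_log).div (by continuity) (fun x => onene x)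
  have h3 : Continuous fun x : ℝ => 1 / (4 * (1 + x ^ 2)) :=
    continuous_const.div (by continuity) (fun x => by positivity)
  exact (h1.add h2).sub h3

lemma cont_Lx : Continuous Lx := by
  unfold Lx
  exact (continuous_const.mul (continuous_pow 2)).div (by continuity) (fun x => onene x)

noncomputable def L1 (y : ℝ) : ℝ := (2 - 2 * y ^ 2) / (1 + y ^ 2) ^ 2
noncomputable def L2 (y : ℝ) : ℝ := (4 * y ^ 3 - 12 * y) / (1 + y ^ 2) ^ 3
noncomputable def wfun (y : ℝ) : ℝ := y ^ 2 / 8 + Real.log y / 2 - 1 / (8 * y ^ 2)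
noncomputable def w1 (y : ℝ) : ℝ := y / 4 + 1 / (2 * y) + 1 / (4 * y ^ 3)
noncomputable def w2 (y : ℝ) : ℝ := 1 / 4 - 1 / (2 * y ^ 2) - 3 / (4 * y ^ 4)
noncomputable def G1 (y : ℝ) : ℝ := L1 y * wfun y + LamQ y * w1 y
noncomputable def G2 (y : ℝ) : ℝ := L2 y * wfun y + 2 * (L1 y * w1 y) + LamQ y * w2 y

lemma hasDerivAt_LamQ (y : ℝ) : HasDerivAt LamQ (L1 y) y := by
  have h1 : HasDerivAt (fun y : ℝ => 2 * y) 2 y := by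
    simpa using (hasDerivAt_id y).const_mul 2
  have h2 : HasDerivAt (fun y : ℝ => 1 + y ^ 2) (2 * y) y := by
    simpa using (hasDerivAt_pow 2 y).const_add 1
  have h := h1.div h2 (onene y)
  refine h.congr_deriv ?_
  unfold L1; field_simp; ring

lemma hasDerivAt_L1 (y : ℝ) : HasDerivAt L1 (L2 y) y := by
  have h1 : HasDerivAt (fun y : ℝ => 2 - 2 * y ^ 2) (-(2 * (2 * y))) y := by
    simpa using ((hasDerivAt_pow 2 y).const_mul 2).const_sub 2
  have h2 : HasDerivAt (fun y : ℝ => 1 + y ^ 2) (2 * y) y := by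
    simpa using (hasDerivAt_pow 2 y).const_add 1
  have h3 : HasDerivAt (fun y : ℝ => (1 + y ^ 2) ^ 2) (2 * (1 + y ^ 2) ^ 1 * (2 * y)) y := h2.pow 2
  have h := h1.div h3 (pow_ne_zero 2 (onene y))
  refine h.congr_deriv ?_
  unfold L2; field_simp; ring

lemma hasDerivAt_wfun {y : ℝ} (hy : y ≠ 0) : HasDerivAt wfun (w1 y) y := by
  have h1 : HasDerivAt (fun y : ℝ => y ^ 2 / 8) (2 * y / 8) y := by
    simpa using (hasDerivAt_pow 2 y).div_const 8
  have h2 : HasDerivAt (fun y : ℝ => Real.log y / 2) (y⁻¹ / 2) y :=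
    (Real.hasDerivAt_log hy).div_const 2
  have hd : HasDerivAt (fun y : ℝ => 8 * y ^ 2) (8 * (2 * y)) y := by
    simpa using (hasDerivAt_pow 2 y).const_mul 8
  have h3 : HasDerivAt (fun y : ℝ => 1 / (8 * y ^ 2))
      ((0 * (8 * y ^ 2) - 1 * (8 * (2 * y))) / (8 * y ^ 2) ^ 2) y :=
    (hasDerivAt_const y 1).div hd (by positivity)
  have h := (h1.add h2).sub h3
  refine h.congr_deriv ?_
  unfold w1; field_simp; ring

lemma hasDerivAt_w1 {y : ℝ} (hy : y ≠ 0) : HasDerivAt w1 (w2 y) y := by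
  have h1 : HasDerivAt (fun y : ℝ => y / 4) (1 / 4) y := by
    simpa using (hasDerivAt_id y).div_const 4
  have hd2 : HasDerivAt (fun y : ℝ => 2 * y) 2 y := by
    simpa using (hasDerivAt_id y).const_mul 2
  have h2 : HasDerivAt (fun y : ℝ => 1 / (2 * y))
      ((0 * (2 * y) - 1 * 2) / (2 * y) ^ 2) y :=
    (hasDerivAt_const y 1).div hd2 (by simpa using hy)
  have hd3 : HasDerivAt (fun y : ℝ => 4 * y ^ 3) (4 * (3 * y ^ 2)) y := by
    simpa using (hasDerivAt_pow 3 y).const_mul 4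
  have h3 : HasDerivAt (fun y : ℝ => 1 / (4 * y ^ 3))
      ((0 * (4 * y ^ 3) - 1 * (4 * (3 * y ^ 2))) / (4 * y ^ 3) ^ 2) y :=
    (hasDerivAt_const y 1).div hd3 (by positivity)
  have h := (h1.add h2).add h3
  refine h.congr_deriv ?_
  unfold w2; field_simp; ring

lemma hasDerivAt_Gam {y : ℝ} (hy : y ≠ 0) : HasDerivAt Gam (G1 y) y := by
  have h := (hasDerivAt_LamQ y).mul (hasDerivAt_wfun hy)
  exact h

lemma hasDerivAt_G1 {y : ℝ} (hy : y ≠ 0) : HasDerivAt G1 (G2 y) y := by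
  have h := ((hasDerivAt_L1 y).mul (hasDerivAt_wfun hy)).add
    ((hasDerivAt_LamQ y).mul (hasDerivAt_w1 hy))
  refine h.congr_deriv ?_
  unfold G2; ring

noncomputable def Aint (f : ℝ → ℝ) (y : ℝ) : ℝ := ∫ x in (0:ℝ)..y, f x * Gg x
noncomputable def Bint (f : ℝ → ℝ) (y : ℝ) : ℝ := ∫ x in (0:ℝ)..y, f x * Lx x
noncomputable def Phi (f : ℝ → ℝ) (y : ℝ) : ℝ := LamQ y * Aint f y - Gam y * Bint f y
noncomputable def D1f (f : ℝ → ℝ) (y : ℝ) : ℝ := L1 y * Aint f y - G1 y * Bint f y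
noncomputable def D2f (f : ℝ → ℝ) (y : ℝ) : ℝ :=
  L2 y * Aint f y + L1 y * (f y * Gg y) - (G2 y * Bint f y + G1 y * (f y * Lx y))

lemma lemP {y : ℝ} (hy : y ≠ 0) : L2 y + L1 y / y - Vfun y * LamQ y / y ^ 2 = 0 := by
  have h1 := onene y
  unfold L2 L1 Vfun LamQ
  field_simp
  ring

lemma lemQp {y : ℝ} (hy : y ≠ 0) :
    2 * (L1 y * w1 y) + LamQ y * w2 y + (LamQ y * w1 y) / y = 0 := by
  have h1 := onene y
  unfold L1 LamQ w1 w2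
  field_simp
  ring

lemma lemQ {y : ℝ} (hy : y ≠ 0) : G2 y + G1 y / y - Vfun y * Gam y / y ^ 2 = 0 := by
  have h1 := lemP hy
  have h2 := lemQp hy
  have hGam : Gam y = LamQ y * wfun y := rfl
  unfold G2 G1
  rw [hGam]
  linear_combination wfun y * h1 + h2

lemma lemR {y : ℝ} (hy : y ≠ 0) : G1 y * Lx y - L1 y * Gg y = 1 := by
  have h1 := onene y
  rw [← Gam_mul hy, ← LamQ_mul]
  unfold G1 Gam LamQ L1 wfun w1
  field_simp
  ring

lemma key (f : ℝ → ℝ) {y : ℝ} (hy : y ≠ 0) :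
    -(D2f f y) - (1 / y) * D1f f y + Vfun y * Phi f y / y ^ 2 = f y := by
  have hP := lemP hy
  have hQ := lemQ hy
  have hR := lemR hy
  unfold D2f D1f Phi
  linear_combination (-(Aint f y)) * hP + (Bint f y) * hQ + (f y) * hR

lemma ae_ne_zero : ∀ᵐ x : ℝ ∂volume, x ≠ 0 := by
  have h0 : volume ({(0:ℝ)} : Set ℝ) = 0 := Real.volume_singleton
  simpa [MeasureTheory.ae_iff] using h0

lemma Hinv_eq_Phi (f : ℝ → ℝ) : Hinv f = Phi f := by
  funext y
  unfold Hinv Phi Aint Bint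
  congr 1
  · congr 1
    apply intervalIntegral.integral_congr_ae
    filter_upwards [ae_ne_zero] with x hx _
    rw [mul_assoc, Gam_mul hx]
  · congr 1
    apply intervalIntegral.integral_congr
    intro x _
    simp only
    rw [mul_assoc, LamQ_mul]

section Main

variable {f : ℝ → ℝ} (hf : ContinuousOn f (Set.Ici 0))

include hf

lemma contOn_fGg : ContinuousOn (fun x => f x * Gg x) (Set.Ici 0) :=
  hf.mul cont_Gg.continuousOn

lemma contOn_fLx : ContinuousOn (fun x => f x * Lx x) (Set.Ici 0) :=
  hf.mul cont_Lx.continuousOn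

lemma hasDerivAt_Aint {y : ℝ} (hy : 0 < y) : HasDerivAt (Aint f) (f y * Gg y) y := by
  have hint : IntervalIntegrable (fun x => f x * Gg x) volume 0 y := by
    apply ContinuousOn.intervalIntegrable
    apply (contOn_fGg hf).mono
    rw [Set.uIcc_of_le hy.le]
    exact Set.Icc_subset_Ici_self
  have hmeas : StronglyMeasurableAtFilter (fun x => f x * Gg x) (nhds y) volume :=
    ContinuousOn.stronglyMeasurableAtFilter isOpen_Ioi
      ((contOn_fGg hf).mono Set.Ioi_subset_Ici_self) y hy
  have hcont : ContinuousAt (fun x => f x * Gg x) y :=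
    (contOn_fGg hf).continuousAt (Filter.mem_of_superset (Ioi_mem_nhds hy) Set.Ioi_subset_Ici_self)
  exact intervalIntegral.integral_hasDerivAt_right hint hmeas hcont

lemma hasDerivAt_Bint {y : ℝ} (hy : 0 < y) : HasDerivAt (Bint f) (f y * Lx y) y := by
  have hint : IntervalIntegrable (fun x => f x * Lx x) volume 0 y := by
    apply ContinuousOn.intervalIntegrable
    apply (contOn_fLx hf).mono
    rw [Set.uIcc_of_le hy.le]
    exact Set.Icc_subset_Ici_self
  have hmeas : StronglyMeasurableAtFilter (fun x => f x * Lx x) (nhds y) volume :=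
    ContinuousOn.stronglyMeasurableAtFilter isOpen_Ioi
      ((contOn_fLx hf).mono Set.Ioi_subset_Ici_self) y hy
  have hcont : ContinuousAt (fun x => f x * Lx x) y :=
    (contOn_fLx hf).continuousAt (Filter.mem_of_superset (Ioi_mem_nhds hy) Set.Ioi_subset_Ici_self)
  exact intervalIntegral.integral_hasDerivAt_right hint hmeas hcont

lemma hasDerivAt_Phi {y : ℝ} (hy : 0 < y) : HasDerivAt (Phi f) (D1f f y) y := by
  have h := ((hasDerivAt_LamQ y).mul (hasDerivAt_Aint hf hy)).sub
    ((hasDerivAt_Gam hy.ne').mul (hasDerivAt_Bint hf hy))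
  refine h.congr_deriv ?_
  unfold D1f
  rw [← Gam_mul hy.ne', ← LamQ_mul]
  ring

lemma hasDerivAt_D1f {y : ℝ} (hy : 0 < y) : HasDerivAt (D1f f) (D2f f y) y := by
  have h := ((hasDerivAt_L1 y).mul (hasDerivAt_Aint hf hy)).sub
    ((hasDerivAt_G1 hy.ne').mul (hasDerivAt_Bint hf hy))
  exact h

end Main

lemma cont_LamQ : Continuous LamQ := by
  unfold LamQ
  exact (continuous_const.mul continuous_id).div (by continuity) (fun x => onene x)

lemma cont_L1 : Continuous L1 := by
  unfold L1
  exact (by continuity : Continuous fun y : ℝ => 2 - 2 * y ^ 2).div (by continuity)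
    (fun x => pow_ne_zero 2 (onene x))

lemma cont_L2 : Continuous L2 := by
  unfold L2
  exact (by continuity : Continuous fun y : ℝ => 4 * y ^ 3 - 12 * y).div (by continuity)
    (fun x => pow_ne_zero 3 (onene x))

lemma contOn_w2 : ContinuousOn w2 (Set.Ioi 0) := by
  unfold w2
  refine (continuousOn_const.sub (continuousOn_const.div
      (by continuity : Continuous fun y : ℝ => 2 * y ^ 2).continuousOn ?_)).sub
    (continuousOn_const.div (by continuity : Continuous fun y : ℝ => 4 * y ^ 4).continuousOn ?_)
  · intro y hy
    have h : (0:ℝ) < y := hy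
    positivity
  · intro y hy
    have h : (0:ℝ) < y := hy
    positivity

lemma contOn_wfun : ContinuousOn wfun (Set.Ioi 0) :=
  fun y hy => ((hasDerivAt_wfun (ne_of_gt hy)).continuousAt).continuousWithinAt

lemma contOn_w1 : ContinuousOn w1 (Set.Ioi 0) :=
  fun y hy => ((hasDerivAt_w1 (ne_of_gt hy)).continuousAt).continuousWithinAt

lemma contOn_G1 : ContinuousOn G1 (Set.Ioi 0) := by
  unfold G1
  exact (cont_L1.continuousOn.mul contOn_wfun).add (cont_LamQ.continuousOn.mul contOn_w1)

lemma contOn_G2 : ContinuousOn G2 (Set.Ioi 0) := by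
  unfold G2
  exact ((cont_L2.continuousOn.mul contOn_wfun).add
    (continuousOn_const.mul (cont_L1.continuousOn.mul contOn_w1))).add
    (cont_LamQ.continuousOn.mul contOn_w2)

lemma contOn_D2f {f : ℝ → ℝ} (hf : ContinuousOn f (Set.Ici 0)) :
    ContinuousOn (D2f f) (Set.Ioi 0) := by
  have hA : ContinuousOn (Aint f) (Set.Ioi 0) :=
    fun y hy => ((hasDerivAt_Aint hf hy).continuousAt).continuousWithinAt
  have hB : ContinuousOn (Bint f) (Set.Ioi 0) :=
    fun y hy => ((hasDerivAt_Bint hf hy).continuousAt).continuousWithinAt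
  have hfI : ContinuousOn f (Set.Ioi 0) := hf.mono Set.Ioi_subset_Ici_self
  unfold D2f
  exact ((cont_L2.continuousOn.mul hA).add
      (cont_L1.continuousOn.mul (hfI.mul cont_Gg.continuousOn))).sub
    ((contOn_G2.mul hB).add (contOn_G1.mul (hfI.mul cont_Lx.continuousOn)))

/-- `H⁻¹f` is a genuine right inverse of `H` on `(0,∞)` and is `O(y²)` at the origin. -/
theorem Hinv_is_right_inverse (f : ℝ → ℝ) (hf : ContinuousOn f (Set.Ici 0)) :
    ContDiffOn ℝ 2 (Hinv f) (Set.Ioi 0) ∧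
    (∀ y > (0:ℝ),
      -(deriv (deriv (Hinv f)) y) - (1 / y) * deriv (Hinv f) y
        + Vfun y * Hinv f y / y ^ 2 = f y) ∧
    Asymptotics.IsBigO (nhdsWithin 0 (Set.Ioi 0)) (Hinv f) (fun y => y ^ 2) := by
  rw [Hinv_eq_Phi]
  have hd1 : ∀ z ∈ Set.Ioi (0:ℝ), deriv (Phi f) z = D1f f z :=
    fun z hz => (hasDerivAt_Phi hf hz).deriv
  have hd2 : ∀ z ∈ Set.Ioi (0:ℝ), deriv (D1f f) z = D2f f z :=
    fun z hz => (hasDerivAt_D1f hf hz).deriv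
  refine ⟨?_, ?_, ?_⟩
  · rw [show (2 : WithTop ℕ∞) = 1 + 1 by norm_num,
      contDiffOn_succ_iff_deriv_of_isOpen isOpen_Ioi]
    refine ⟨fun y hy => ((hasDerivAt_Phi hf hy).differentiableAt).differentiableWithinAt,
      fun h => by simp at h, ?_⟩
    refine ContDiffOn.congr ?_ hd1
    rw [show (1 : WithTop ℕ∞) = 0 + 1 by norm_num,
      contDiffOn_succ_iff_deriv_of_isOpen isOpen_Ioi]
    refine ⟨fun y hy => ((hasDerivAt_D1f hf hy).differentiableAt).differentiableWithinAt,
      fun h => by simp at h, ?_⟩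
    rw [contDiffOn_zero]
    exact (contOn_D2f hf).congr hd2
  · intro y hy
    have heq : deriv (Phi f) =ᶠ[nhds y] D1f f :=
      Filter.eventually_of_mem (Ioi_mem_nhds hy) hd1
    rw [heq.deriv_eq, hd1 y hy, (hasDerivAt_D1f hf hy).deriv]
    exact key f hy.ne'
  · rw [Asymptotics.isBigO_iff]
    obtain ⟨M, hM⟩ := (isCompact_Icc (a := (0:ℝ)) (b := 1)).exists_bound_of_continuousOn
      (hf.mono (fun x hx => hx.1))
    obtain ⟨C, hC⟩ := (isCompact_Icc (a := (0:ℝ)) (b := 1)).exists_bound_of_continuousOn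
      cont_Gg.continuousOn
    have hM0 : 0 ≤ M := le_trans (norm_nonneg (f 0)) (hM 0 (by constructor <;> norm_num))
    have hC0 : 0 ≤ C := le_trans (norm_nonneg (Gg 0)) (hC 0 (by constructor <;> norm_num))
    refine ⟨4 * (M * C), ?_⟩
    filter_upwards [Ioo_mem_nhdsGT_of_mem
      (by constructor <;> norm_num : (0:ℝ) ∈ Set.Ico 0 1)] with y hy
    obtain ⟨hy0, hy1⟩ := hy
    have hsub : Set.uIoc (0:ℝ) y ⊆ Set.Icc 0 1 := by
      rw [Set.uIoc_of_le hy0.le]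
      intro x hx
      exact ⟨hx.1.le, hx.2.trans hy1.le⟩
    have hAb : ‖Aint f y‖ ≤ M * C * |y - 0| := by
      apply intervalIntegral.norm_integral_le_of_norm_le_const
      intro x hx
      have hx' := hsub hx
      rw [norm_mul]
      exact mul_le_mul (hM x hx') (hC x hx') (norm_nonneg _) hM0
    have hBb : ‖Bint f y‖ ≤ (M * (2 * y ^ 2)) * |y - 0| := by
      apply intervalIntegral.norm_integral_le_of_norm_le_const
      intro x hx
      have hx2 : x ∈ Set.Ioc 0 y := Set.uIoc_of_le hy0.le ▸ hx
      have hx0 : 0 < x := hx2.1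
      have hxy : x ≤ y := hx2.2
      rw [norm_mul]
      apply mul_le_mul (hM x (hsub hx)) ?_ (norm_nonneg _) hM0
      rw [show Lx x = 2 * x ^ 2 / (1 + x ^ 2) from rfl, Real.norm_eq_abs,
        abs_of_nonneg (by positivity)]
      calc 2 * x ^ 2 / (1 + x ^ 2) ≤ 2 * x ^ 2 := by
            apply div_le_self (by positivity)
            nlinarith [sq_nonneg x]
        _ ≤ 2 * y ^ 2 := by nlinarith
    have hLam : ‖LamQ y‖ ≤ 2 * y := by
      rw [show LamQ y = 2 * y / (1 + y ^ 2) from rfl, Real.norm_eq_abs,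
        abs_of_nonneg (by positivity)]
      apply div_le_self (by positivity)
      nlinarith [sq_nonneg y]
    have hGamb : ‖Gam y‖ ≤ C / y := by
      rw [show Gam y = Gg y / y from (eq_div_iff hy0.ne').2 (Gam_mul hy0.ne'),
        norm_div, Real.norm_eq_abs y, abs_of_pos hy0]
      gcongr
      exact hC y ⟨hy0.le, hy1.le⟩
    have habs : |y - (0:ℝ)| = y := by rw [sub_zero, abs_of_pos hy0]
    rw [habs] at hAb hBb
    have h1 : ‖Phi f y‖ ≤ ‖LamQ y‖ * ‖Aint f y‖ + ‖Gam y‖ * ‖Bint f y‖ := by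
      calc ‖Phi f y‖ = ‖LamQ y * Aint f y - Gam y * Bint f y‖ := rfl
        _ ≤ ‖LamQ y * Aint f y‖ + ‖Gam y * Bint f y‖ := norm_sub_le _ _
        _ = ‖LamQ y‖ * ‖Aint f y‖ + ‖Gam y‖ * ‖Bint f y‖ := by rw [norm_mul, norm_mul]
    have e1 : ‖LamQ y‖ * ‖Aint f y‖ ≤ (2 * y) * (M * C * y) :=
      mul_le_mul hLam hAb (norm_nonneg _) (by positivity)
    have e2 : ‖Gam y‖ * ‖Bint f y‖ ≤ (C / y) * ((M * (2 * y ^ 2)) * y) :=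
      mul_le_mul hGamb hBb (norm_nonneg _) (div_nonneg hC0 hy0.le)
    have e3 : (C / y) * ((M * (2 * y ^ 2)) * y) = 2 * (M * C) * y ^ 2 := by
      field_simp
    have hnorm : ‖(fun y : ℝ => y ^ 2) y‖ = y ^ 2 := by
      simp only [Real.norm_eq_abs]
      exact abs_of_nonneg (by positivity)
    rw [hnorm]
    nlinarith [h1, e1, e2, e3]
end

section
/- Let Z(y) = (1−y²)/(1+y²) and set Ṽ(y) = (1+Z(y))² − y·Z'(y). Then: (i) Ṽ(y) = 4/(1+y²) for all y ∈ ℝ; (ii) for every twice differentiable v : (0,∞) → ℝ and y > 0, (A(A*v))(y) = −v''(y) − (1/y)v'(y) + Ṽ(y)v(y)/y², where (Au)(y) = −u'(y) + Z(y)u(y)/y and (A*v)(y) = v'(y) + (1+Z(y))v(y)/y; (iii) the conjugate potential is repulsive: Ṽ(y) > 0 and (ΛṼ)(y) = y·Ṽ'(y) = −8y²/(1+y²)² ≤ 0 for all y > 0. -/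
open Real

/-- `Z(y) = (1-y²)/(1+y²)`. -/
noncomputable def Zfun (y : ℝ) : ℝ := (1 - y ^ 2) / (1 + y ^ 2)

/-- The conjugate potential `Ṽ(y) = (1+Z(y))² - y Z'(y)`. -/
noncomputable def Vtilde (y : ℝ) : ℝ := (1 + Zfun y) ^ 2 - y * deriv Zfun y

/-- `(Au)(y) = -u'(y) + Z(y)u(y)/y`. -/
noncomputable def Aop (u : ℝ → ℝ) : ℝ → ℝ := fun y => -deriv u y + Zfun y * u y / y

/-- `(A*v)(y) = v'(y) + (1+Z(y))v(y)/y`. -/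
noncomputable def Astarop (v : ℝ → ℝ) : ℝ → ℝ := fun y => deriv v y + (1 + Zfun y) * v y / y

lemma one_add_sq_pos (y : ℝ) : (0:ℝ) < 1 + y ^ 2 := by positivity

lemma hZderiv (y : ℝ) : HasDerivAt Zfun (-4 * y / (1 + y ^ 2) ^ 2) y := by
  have hne : (1 + y ^ 2) ≠ 0 := (one_add_sq_pos y).ne'
  have h1 : HasDerivAt (fun t : ℝ => 1 - t ^ 2) (-(2 * y)) y := by
    simpa using ((hasDerivAt_pow 2 y).const_sub 1)
  have h2 : HasDerivAt (fun t : ℝ => 1 + t ^ 2) (2 * y) y := by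
    simpa using ((hasDerivAt_pow 2 y).const_add 1)
  have : HasDerivAt Zfun _ y := h1.div h2 hne
  convert this using 1
  field_simp
  ring

lemma Zderiv_eq (y : ℝ) : deriv Zfun y = -4 * y / (1 + y ^ 2) ^ 2 :=
  (hZderiv y).deriv

lemma Vtilde_eq (y : ℝ) : Vtilde y = 4 / (1 + y ^ 2) := by
  have hne : (1 + y ^ 2) ≠ 0 := (one_add_sq_pos y).ne'
  simp only [Vtilde, Zfun, Zderiv_eq]
  field_simp
  ring

lemma hVderiv (y : ℝ) : HasDerivAt Vtilde (-8 * y / (1 + y ^ 2) ^ 2) y := by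
  have hne : (1 + y ^ 2) ≠ 0 := (one_add_sq_pos y).ne'
  have h2 : HasDerivAt (fun t : ℝ => 1 + t ^ 2) (2 * y) y := by
    simpa using ((hasDerivAt_pow 2 y).const_add 1)
  have : HasDerivAt (fun t : ℝ => 4 / (1 + t ^ 2)) _ y := (hasDerivAt_const y (4:ℝ)).div h2 hne
  have heq : (fun t : ℝ => 4 / (1 + t ^ 2)) = Vtilde := by
    funext t; rw [Vtilde_eq]
  rw [heq] at this
  convert this using 1
  field_simp
  ring

/-- The super-symmetric conjugate Hamiltonian `H̃ = A A*` has potential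
`Ṽ = 4/(1+y²)`, which is positive with `ΛṼ ≤ 0` (the repulsive property). -/
theorem conjugate_Hamiltonian_repulsive :
    (∀ y : ℝ, Vtilde y = 4 / (1 + y ^ 2)) ∧
    (∀ v : ℝ → ℝ, (∀ y ∈ Set.Ioi (0:ℝ), DifferentiableAt ℝ v y) →
      (∀ y ∈ Set.Ioi (0:ℝ), DifferentiableAt ℝ (deriv v) y) →
      ∀ y > (0:ℝ),
        Aop (Astarop v) y
          = -(deriv (deriv v) y) - (1 / y) * deriv v y + Vtilde y * v y / y ^ 2) ∧
    (∀ y > (0:ℝ),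
      0 < Vtilde y ∧ y * deriv Vtilde y = -8 * y ^ 2 / (1 + y ^ 2) ^ 2 ∧
        y * deriv Vtilde y ≤ 0) := by
  refine ⟨Vtilde_eq, ?_, ?_⟩
  · intro v hv hv' y hy
    have hyne : y ≠ 0 := ne_of_gt hy
    have hne : (1 + y ^ 2) ≠ 0 := (one_add_sq_pos y).ne'
    have h1 : HasDerivAt (deriv v) (deriv (deriv v) y) y := (hv' y hy).hasDerivAt
    have h2 : HasDerivAt (fun t : ℝ => (1 + Zfun t) * v t / t)
        ((((-4 * y / (1 + y ^ 2) ^ 2) * v y + (1 + Zfun y) * deriv v y) * y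
          - (1 + Zfun y) * v y * 1) / (y ^ 2)) y := by
      have : HasDerivAt (fun t : ℝ => (1 + Zfun t) * v t / t) _ y := (((hZderiv y).const_add 1).mul (hv y hy).hasDerivAt).div (hasDerivAt_id y) hyne
      simpa using this
    have hsum : HasDerivAt (Astarop v)
        (deriv (deriv v) y + ((((-4 * y / (1 + y ^ 2) ^ 2) * v y + (1 + Zfun y) * deriv v y) * y
          - (1 + Zfun y) * v y * 1) / (y ^ 2))) y := h1.add h2
    have hder : deriv (Astarop v) y = _ := hsum.deriv
    simp only [Aop, Astarop, hder, Vtilde_eq, Zfun]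
    field_simp
    ring
  · intro y hy
    have hne : (0:ℝ) < 1 + y ^ 2 := one_add_sq_pos y
    refine ⟨by rw [Vtilde_eq]; positivity, ?_, ?_⟩
    · rw [(hVderiv y).deriv]; field_simp
    · rw [(hVderiv y).deriv]
      have h : y * (-8 * y / (1 + y ^ 2) ^ 2) = -(8 * y ^ 2 / (1 + y ^ 2) ^ 2) := by ring
      rw [h]
      exact neg_nonpos.mpr (by positivity)
end
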